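/- Let Ξ be a minimal and aperiodic right-infinite subshift over a finite alphabet with language ℒ. If Ξ is right-special balanced, then for every choice function τ the set of edges { (τ(v₁), τ(v₂)) : (v₁,v₂) ∈ H⁽¹⁾ } equals the set of edges { (τ(u₁), τ(u₂)) : (u₁,u₂) ∈ H̃⁽¹⁾ }, i.e. the approximation graphs Γ_τ and Γ̃_τ coincide. -/
import Mathlib


open scoped ENNReal Classical

noncomputable section

namespace Arx1111

variable {A : Type*}

/-! ### Words and infinite words -/

/-- The left shift on right-infinite words. -/
def shift (ξ : ℕ → A) : ℕ → A := fun n => ξ (n + 1)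

/-- The finite word `u` occurs in the infinite word `ξ` at position `k`. -/
def FactorAt (u : List A) (ξ : ℕ → A) (k : ℕ) : Prop :=
  u = (List.range u.length).map fun i => ξ (k + i)

/-- `u` is a factor of the infinite word `ξ`. -/
def IsFactorOf (u : List A) (ξ : ℕ → A) : Prop := ∃ k, FactorAt u ξ k

/-- `u` is a prefix of the infinite word `ξ`. -/
def PrefixOfInf (u : List A) (ξ : ℕ → A) : Prop := FactorAt u ξ 0

/-- `u` is a proper prefix of `v`. -/
def PPrefix (u v : List A) : Prop := u <+: v ∧ u ≠ v

/-- The `n`-th power `u^n` of a finite word `u`. -/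
def wordPow (u : List A) : ℕ → List A
  | 0 => []
  | n + 1 => u ++ wordPow u n

/-- The language of a set of infinite words: all finite factors of its elements. -/
def language (Ξ : Set (ℕ → A)) : Set (List A) := {u | ∃ ξ ∈ Ξ, IsFactorOf u ξ}

/-! ### Subshifts -/

/-- `Ξ` is a (right-infinite) subshift: nonempty, closed, shift-invariant. -/
structure IsSubshift [TopologicalSpace A] (Ξ : Set (ℕ → A)) : Prop where
  nonempty : Ξ.Nonempty
  isClosed : IsClosed Ξ
  shift_mem : ∀ ξ ∈ Ξ, shift ξ ∈ Ξ

/-- Minimality: every orbit is dense in `Ξ`. -/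
def IsMinimal [TopologicalSpace A] (Ξ : Set (ℕ → A)) : Prop :=
  ∀ ξ ∈ Ξ, Ξ ⊆ closure (Set.range fun n => shift^[n] ξ)

/-- Aperiodicity. -/
def Aperiodic (Ξ : Set (ℕ → A)) : Prop :=
  ∀ ξ ∈ Ξ, ∀ n : ℕ, shift^[n] ξ = ξ → n = 0

/-! ### Occurrences, complete first returns, privileged words -/

variable [DecidableEq A]

/-- The number of occurrences of `u` as a factor of `w`. -/
def occCount (u w : List A) : ℕ :=
  ((List.range (w.length + 1)).filter fun k => (w.drop k).take u.length == u).length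

/-- `u'` is a complete first return to `u`: if `u` is empty, `u'` is a single letter;
otherwise `u` is a prefix and a suffix of `u'` and occurs exactly twice in `u'`. -/
def IsCFR (u u' : List A) : Prop :=
  if u = [] then u'.length = 1
  else u <+: u' ∧ u <:+ u' ∧ occCount u u' = 2

/-- Privileged words of order `n`. -/
inductive PrivOrder : ℕ → List A → Prop where
  | zero : PrivOrder 0 []
  | succ {n : ℕ} {u u' : List A} : PrivOrder n u → IsCFR u u' → PrivOrder (n + 1) u'

/-- A word is privileged if it is privileged of some order. -/
def IsPrivileged (u : List A) : Prop := ∃ n, PrivOrder n u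

/-- `u'` is a complete first return to `u` inside the language `L`. -/
def CFRin (L : Set (List A)) (u u' : List A) : Prop := u' ∈ L ∧ IsCFR u u'

/-- `u` is right-special for the language `L`. -/
def RightSpecial (L : Set (List A)) (u : List A) : Prop :=
  u ∈ L ∧ ∃ a b : A, a ≠ b ∧ u ++ [a] ∈ L ∧ u ++ [b] ∈ L

/-- `a(v)`: number of one-letter right extensions of `v` in `L`, minus one. -/
def aext (L : Set (List A)) (v : List A) : ℕ := Nat.card {a : A // v ++ [a] ∈ L} - 1

/-- `ã(v)`: number of complete first returns to `v` in `L`, minus one, if `v` is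
privileged, and `0` otherwise. -/
def atil (L : Set (List A)) (v : List A) : ℕ :=
  if IsPrivileged v then Nat.card {u' : List A // CFRin L v u'} - 1 else 0

/-- `S(u)`: right-special words `r` with `u ⪯ r ≺ u'` for some complete first return `u'`. -/
def Sset (L : Set (List A)) (u : List A) : Set (List A) :=
  {r | RightSpecial L r ∧ ∃ u', CFRin L u u' ∧ u <+: r ∧ PPrefix r u'}

/-- Right-special balanced: between a privileged word and any of its complete first
returns there is exactly one right-special word. -/
def RSBalanced (L : Set (List A)) : Prop :=
  ∀ u, IsPrivileged u → u ∈ L → ∀ u', CFRin L u u' →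
    ∃! r, RightSpecial L r ∧ u <+: r ∧ PPrefix r u'

/-- `r'` is the shortest right-special word having `r` as a proper prefix. -/
def IsShortestRSExt (L : Set (List A)) (r r' : List A) : Prop :=
  RightSpecial L r' ∧ PPrefix r r' ∧
    ∀ r'', RightSpecial L r'' → PPrefix r r'' → r'.length ≤ r''.length

/-- `r = φ⁽⁰⁾(u)`: `r` is the shortest right-special word having `u` as a prefix. -/
def IsPhi0 (L : Set (List A)) (u r : List A) : Prop :=
  RightSpecial L r ∧ u <+: r ∧ ∀ r', RightSpecial L r' → u <+: r' → r.length ≤ r'.length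

/-- `H⁽¹⁾`: pairs of distinct one-letter right extensions of a common word. -/
def H1 (L : Set (List A)) (v₁ v₂ : List A) : Prop :=
  v₁ ∈ L ∧ v₂ ∈ L ∧ v₁ ≠ v₂ ∧ ∃ (w : List A) (a b : A), v₁ = w ++ [a] ∧ v₂ = w ++ [b]

/-- `H̃⁽¹⁾`: pairs of distinct complete first returns to a common privileged word. -/
def TildeH1 (L : Set (List A)) (u₁ u₂ : List A) : Prop :=
  u₁ ≠ u₂ ∧ ∃ u, IsPrivileged u ∧ CFRin L u u₁ ∧ CFRin L u u₂

/-- Length of the longest common prefix of two finite words. -/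
def lcpLenW (u v : List A) : ℕ := sSup {n | n ≤ u.length ∧ u.take n = v.take n}

/-- Length of the longest common privileged prefix of two finite words. -/
def weeLenW (u v : List A) : ℕ :=
  sSup {n | ∃ w : List A, IsPrivileged w ∧ w.length = n ∧ w <+: u ∧ w <+: v}

/-- `φ⁽¹⁾`: the pair of one-letter extensions of `u₁ ∧ u₂` which are prefixes of
`u₁` resp. `u₂`. -/
def phi1 (u₁ u₂ : List A) : List A × List A :=
  (u₁.take (lcpLenW u₁ u₂ + 1), u₂.take (lcpLenW u₁ u₂ + 1))

/-! ### Bounded powers and repulsiveness -/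

/-- Bounded powers: there is `p` such that no `(p+1)`-th power of a nonempty word
belongs to `L`. -/
def BoundedPowers (L : Set (List A)) : Prop :=
  ∃ p : ℕ, ∀ u ∈ L, u ≠ [] → wordPow u (p + 1) ∉ L

/-- The set of ratios `(|W|-|w|)/|w|` over words `w, W ∈ L` with `w` a nonempty proper
prefix and a suffix of `W`. -/
def repulsionSet (L : Set (List A)) : Set ℝ :=
  {x | ∃ w W : List A, w ∈ L ∧ W ∈ L ∧ w ≠ [] ∧ PPrefix w W ∧ w <:+ W ∧
        x = ((W.length : ℝ) - (w.length : ℝ)) / (w.length : ℝ)}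

/-- The index of repulsiveness `ℓ`. -/
def repulsionIndex (L : Set (List A)) : ℝ := sInf (repulsionSet L)

/-- Repulsive: `ℓ > 0`. -/
def Repulsive (L : Set (List A)) : Prop := 0 < repulsionIndex L

/-! ### Privileged prefixes of infinite words -/

/-- The `n`-th privileged prefix `ξ̃ₙ` of an infinite word `ξ`. -/
def privPrefix (ξ : ℕ → A) : ℕ → List A
  | 0 => []
  | n + 1 =>
    if h : ∃ u', IsCFR (privPrefix ξ n) u' ∧ PrefixOfInf u' ξ then h.choose
    else privPrefix ξ n

/-- The order `ind(ξ ⩏ η)` of the longest common privileged prefix of two infinite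
words; the word `ξ ⩏ η` itself is `privPrefix ξ (weeInd ξ η)`. -/
def weeInd (ξ η : ℕ → A) : ℕ := sSup {n | privPrefix ξ n = privPrefix η n}

/-- Length of the longest common prefix `ξ ∧ η` of two distinct infinite words. -/
def lcpLenInf (ξ η : ℕ → A) : ℕ := sInf {n | ξ n ≠ η n}

/-! ### Choice functions, weight functions and the metrics -/

/-- A choice function for `Ξ`. -/
def IsChoiceFun (Ξ : Set (ℕ → A)) (τ : List A → ℕ → A) : Prop :=
  (∀ v ∈ language Ξ, τ v ∈ Ξ ∧ PrefixOfInf v (τ v)) ∧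
  (∀ v ∈ language Ξ, ∀ w ∈ language Ξ, v.length < w.length →
    PrefixOfInf w (τ v) → τ w = τ v)

/-- A weight function. -/
structure IsWeight (δ : ℕ → ℝ) : Prop where
  pos : ∀ n, 0 < δ n
  strictAnti : StrictAnti δ
  tendsto_zero : Filter.Tendsto δ Filter.atTop (nhds 0)
  submul : ∃ c : ℝ, 0 < c ∧ ∀ a b : ℕ, δ (a * b) ≤ c * δ a * δ b
  doubling : ∃ c : ℝ, 0 < c ∧ ∀ a : ℕ, c * δ a ≤ δ (2 * a)

variable [TopologicalSpace A]

/-- The metric `d_τ` associated to the right-special horizontal edges. -/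
def dTau (Ξ : Set (ℕ → A)) (δ : ℕ → ℝ) (τ : List A → ℕ → A) (ξ η : ℕ → A) : ℝ≥0∞ :=
  ⨆ f : {f : (ℕ → A) → ℝ // ContinuousOn f Ξ ∧
      ∀ v₁ v₂, H1 (language Ξ) v₁ v₂ → |f (τ v₁) - f (τ v₂)| ≤ δ (lcpLenW v₁ v₂)},
    ENNReal.ofReal |f.1 ξ - f.1 η|

/-- The metric `d̃_τ` associated to the privileged horizontal edges. -/
def dTilTau (Ξ : Set (ℕ → A)) (δ : ℕ → ℝ) (τ : List A → ℕ → A) (ξ η : ℕ → A) : ℝ≥0∞ :=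
  ⨆ f : {f : (ℕ → A) → ℝ // ContinuousOn f Ξ ∧
      ∀ u₁ u₂, TildeH1 (language Ξ) u₁ u₂ → |f (τ u₁) - f (τ u₂)| ≤ δ (weeLenW u₁ u₂)},
    ENNReal.ofReal |f.1 ξ - f.1 η|

/-- `d_inf`. -/
def dInf (Ξ : Set (ℕ → A)) (δ : ℕ → ℝ) (ξ η : ℕ → A) : ℝ≥0∞ :=
  ⨅ τ : {τ // IsChoiceFun Ξ τ}, dTau Ξ δ τ.1 ξ η

/-- `d_sup`. -/
def dSup (Ξ : Set (ℕ → A)) (δ : ℕ → ℝ) (ξ η : ℕ → A) : ℝ≥0∞ :=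
  ⨆ τ : {τ // IsChoiceFun Ξ τ}, dTau Ξ δ τ.1 ξ η

/-- `d̃_inf`. -/
def dTilInf (Ξ : Set (ℕ → A)) (δ : ℕ → ℝ) (ξ η : ℕ → A) : ℝ≥0∞ :=
  ⨅ τ : {τ // IsChoiceFun Ξ τ}, dTilTau Ξ δ τ.1 ξ η

/-- `d̃_sup`. -/
def dTilSup (Ξ : Set (ℕ → A)) (δ : ℕ → ℝ) (ξ η : ℕ → A) : ℝ≥0∞ :=
  ⨆ τ : {τ // IsChoiceFun Ξ τ}, dTilTau Ξ δ τ.1 ξ η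

/-- `β̃_τ(ξ̃ₙ)`: equals `1` if the longest common privileged prefix of `τ(ξ̃ₙ)` and `ξ`
is `ξ̃ₙ`, and `0` otherwise. -/
def btil (τ : List A → ℕ → A) (ξ : ℕ → A) (n : ℕ) : ℝ≥0∞ :=
  if privPrefix (τ (privPrefix ξ n)) (weeInd (τ (privPrefix ξ n)) ξ) = privPrefix ξ n
  then 1 else 0

/-! ### Zeta functions -/

/-- `ζ_k(s)` (with the convention `0⁰ = 0`). -/
def zeta (L : Set (List A)) (δ : ℕ → ℝ) (k : ℕ) (s : ℝ) : ℝ≥0∞ :=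
  ∑' v : L, (if aext L (v : List A) = 0 then 0 else ((aext L (v : List A) : ℝ≥0∞)) ^ k) *
    ENNReal.ofReal (δ (v : List A).length ^ s)

/-- `ζ̃_k(s)` (with the convention `0⁰ = 0`). -/
def zetaTil (L : Set (List A)) (δ : ℕ → ℝ) (k : ℕ) (s : ℝ) : ℝ≥0∞ :=
  ∑' v : L, (if atil L (v : List A) = 0 then 0 else ((atil L (v : List A) : ℝ≥0∞)) ^ k) *
    ENNReal.ofReal (δ (v : List A).length ^ s)

/-- Almost finite privileged rank. -/
def AlmostFiniteRank (L : Set (List A)) : Prop :=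
  ∃ a b : ℝ, 0 < a ∧ 0 < b ∧ ∀ u, IsPrivileged u → u ∈ L → 2 ≤ u.length →
    (Nat.card {u' : List A // CFRin L u u'} : ℝ) ≤ a * (Real.log u.length) ^ b


/-! ### Auxiliary lemmas -/

section Aux

set_option linter.unusedSectionVars false

def tk (ξ : ℕ → A) (k n : ℕ) : List A := (List.range n).map fun i => ξ (k + i)

@[simp] lemma tk_length (ξ : ℕ → A) (k n : ℕ) : (tk ξ k n).length = n := by simp [tk]

@[simp] lemma tk_getElem (ξ : ℕ → A) (k n : ℕ) (i : ℕ) (h : i < (tk ξ k n).length) :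
    (tk ξ k n)[i] = ξ (k + i) := by simp [tk]

lemma tk_take (ξ : ℕ → A) (k : ℕ) {n m : ℕ} (h : n ≤ m) :
    (tk ξ k m).take n = tk ξ k n := by
  apply List.ext_getElem (by simp [h])
  intro i h1 h2
  simp

lemma tk_succ (ξ : ℕ → A) (k n : ℕ) : tk ξ k (n + 1) = tk ξ k n ++ [ξ (k + n)] := by
  simp [tk, List.range_succ]

lemma eq_tk_iff {u : List A} {ξ : ℕ → A} {k n : ℕ} :
    u = tk ξ k n ↔ u.length = n ∧ ∀ i (_ : i < u.length), u[i] = ξ (k + i) := by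
  constructor
  · rintro rfl; simp
  · rintro ⟨h1, h2⟩
    apply List.ext_getElem (by simp [h1])
    intro i hi1 hi2
    simp [h2 i hi1]

lemma factorAt_iff {u : List A} {ξ : ℕ → A} {k : ℕ} :
    FactorAt u ξ k ↔ ∀ i (_ : i < u.length), u[i] = ξ (k + i) := by
  rw [show FactorAt u ξ k ↔ u = tk ξ k u.length from Iff.rfl, eq_tk_iff]
  simp

lemma factorAt_tk (ξ : ℕ → A) (k n : ℕ) : FactorAt (tk ξ k n) ξ k :=
  factorAt_iff.2 (by intro i hi; simp)

lemma prefixOfInf_eq_tk {u : List A} {ξ : ℕ → A} (h : PrefixOfInf u ξ) :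
    u = tk ξ 0 u.length := h

lemma prefixOfInf_tk (ξ : ℕ → A) (n : ℕ) : PrefixOfInf (tk ξ 0 n) ξ := factorAt_tk ξ 0 n

lemma tk_mem_language {Ξ : Set (ℕ → A)} {ξ : ℕ → A} (hξ : ξ ∈ Ξ) (k n : ℕ) :
    tk ξ k n ∈ language Ξ := ⟨ξ, hξ, k, factorAt_tk ξ k n⟩

lemma prefixOfInf_of_prefix {u v : List A} {ξ : ℕ → A} (h : u <+: v) (hv : PrefixOfInf v ξ) :
    PrefixOfInf u ξ := by
  show u = tk ξ 0 u.length
  rw [eq_tk_iff]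
  refine ⟨rfl, ?_⟩
  intro i hi
  rw [h.getElem hi]
  have := factorAt_iff.mp hv i (lt_of_lt_of_le hi h.length_le)
  simpa using this

lemma prefixOfInf_prefix {u v : List A} {ξ : ℕ → A} (hu : PrefixOfInf u ξ)
    (hv : PrefixOfInf v ξ) (h : u.length ≤ v.length) : u <+: v := by
  rw [prefixOfInf_eq_tk hu, prefixOfInf_eq_tk hv, ← tk_take ξ 0 h]
  exact List.take_prefix _ _

lemma prefix_mem_language {Ξ : Set (ℕ → A)} {v w : List A} (h : v <+: w)
    (hw : w ∈ language Ξ) : v ∈ language Ξ := by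
  obtain ⟨ξ, hξ, k, hk⟩ := hw
  refine ⟨ξ, hξ, k, factorAt_iff.2 ?_⟩
  intro i hi
  have hlen : v.length ≤ w.length := h.length_le
  rw [h.getElem hi]
  exact factorAt_iff.mp hk i (lt_of_lt_of_le hi hlen)

lemma mem_language_of_prefixOfInf {Ξ : Set (ℕ → A)} {u : List A} {ξ : ℕ → A}
    (hξ : ξ ∈ Ξ) (h : PrefixOfInf u ξ) : u ∈ language Ξ := ⟨ξ, hξ, 0, h⟩

lemma shift_iterate_apply (ξ : ℕ → A) (n i : ℕ) : (shift^[n] ξ) i = ξ (n + i) := by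
  induction n generalizing ξ i with
  | zero => simp
  | succ n ih =>
    rw [Function.iterate_succ_apply, ih]
    show ξ (n + i + 1) = ξ (n + 1 + i)
    congr 1
    omega

lemma take_succ_getElem {l : List A} {n : ℕ} (h : n < l.length) :
    l.take (n + 1) = l.take n ++ [l[n]] := by
  simpa using (List.take_concat_get l n h).symm

lemma PPrefix.length_lt {c u : List A} (h : PPrefix c u) : c.length < u.length :=
  lt_of_le_of_ne h.1.length_le fun he => h.2 (h.1.eq_of_length he)

lemma priv_nil : IsPrivileged ([] : List A) := ⟨0, .zero⟩

lemma priv_single (x : A) : IsPrivileged [x] := ⟨1, .succ .zero (by simp [IsCFR])⟩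

lemma priv_cfr {u u' : List A} (h : IsPrivileged u) (h' : IsCFR u u') : IsPrivileged u' := by
  obtain ⟨n, hn⟩ := h; exact ⟨n + 1, .succ hn h'⟩

/-- `u` occurs in `w` at position `k`. -/
def OccAt (u w : List A) (k : ℕ) : Prop := (w.drop k).take u.length = u

lemma list_filter_length_eq_card {n : ℕ} (p : ℕ → Bool) :
    ((List.range n).filter p).length = ((Finset.range n).filter fun k => p k = true).card := by
  induction n with
  | zero => simp
  | succ n ih =>
    rw [List.range_succ, List.filter_append, Finset.range_add_one, Finset.filter_insert]
    by_cases h : p n = true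
    · rw [if_pos h, Finset.card_insert_of_notMem (by simp [Finset.mem_filter])]
      simp [h, ih]
    · simp [h, ih]

lemma occCount_eq_card (u w : List A) :
    occCount u w = ((Finset.range (w.length + 1)).filter fun k => OccAt u w k).card := by
  rw [occCount, list_filter_length_eq_card]
  congr 1
  apply Finset.filter_congr
  intro x _
  simp [OccAt]

lemma occAt_iff {u w : List A} (hu : u ≠ []) {k : ℕ} :
    OccAt u w k ↔ k + u.length ≤ w.length ∧
      ∀ i, ∀ (_ : i < u.length) (_ : k + i < w.length), u[i] = w[k + i] := by
  constructor
  · intro h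
    have hlen := congrArg List.length h
    simp only [List.length_take, List.length_drop] at hlen
    have hne : 0 < u.length := List.length_pos_iff.mpr hu
    have hle : k + u.length ≤ w.length := by omega
    refine ⟨hle, ?_⟩
    intro i hi1 hi2
    rw [List.getElem_of_eq h.symm hi1, List.getElem_take, List.getElem_drop]
  · rintro ⟨hle, hg⟩
    apply List.ext_getElem (by simp; omega)
    intro i h1 h2
    rw [List.getElem_take, List.getElem_drop]
    exact (hg i h2 (by omega)).symm

lemma occAt_tk_iff {u : List A} (hu : u ≠ []) {ξ : ℕ → A} {N k : ℕ} :
    OccAt u (tk ξ 0 N) k ↔ k + u.length ≤ N ∧ FactorAt u ξ k := by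
  rw [occAt_iff hu, factorAt_iff]
  simp only [tk_length]
  constructor
  · rintro ⟨h1, h2⟩
    refine ⟨h1, fun i hi => ?_⟩
    rw [h2 i hi (by omega)]
    simp [Nat.zero_add]
  · rintro ⟨h1, h2⟩
    refine ⟨h1, fun i hi _ => ?_⟩
    rw [h2 i hi]
    simp [Nat.zero_add]

lemma occAt_append (t u r : List A) : OccAt u (t ++ u ++ r) t.length := by
  rw [OccAt, List.append_assoc, List.drop_left, List.take_left]

lemma occAt_prefix {u w : List A} (h : u <+: w) : OccAt u w 0 := by
  obtain ⟨r, rfl⟩ := h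
  simpa using occAt_append [] u r

lemma occAt_suffix {u w : List A} (h : u <:+ w) : OccAt u w (w.length - u.length) := by
  obtain ⟨t, rfl⟩ := h
  have : (t ++ u).length - u.length = t.length := by simp
  rw [this]
  simpa using occAt_append t u []

lemma occCount_self {u : List A} (hu : u ≠ []) : occCount u u = 1 := by
  rw [occCount_eq_card]
  have : ((Finset.range (u.length + 1)).filter fun k => OccAt u u k) = {0} := by
    ext j
    simp only [Finset.mem_filter, Finset.mem_range, Finset.mem_singleton]
    constructor
    · rintro ⟨hj, ho⟩
      have := (occAt_iff hu).mp ho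
      omega
    · rintro rfl
      exact ⟨by omega, occAt_prefix (List.prefix_refl u)⟩
  rw [this, Finset.card_singleton]

lemma exists_pos_factorAt [DiscreteTopology A] {Ξ : Set (ℕ → A)}
    (hΞ : IsSubshift Ξ) (hmin : IsMinimal Ξ) {u : List A} (hu : u ∈ language Ξ)
    {ξ : ℕ → A} (hξ : ξ ∈ Ξ) : ∃ k, 0 < k ∧ FactorAt u ξ k := by
  obtain ⟨η, hη, j, hj⟩ := hu
  have hξ' : shift ξ ∈ Ξ := hΞ.shift_mem ξ hξ
  have hcl : η ∈ closure (Set.range fun n => shift^[n] (shift ξ)) := hmin _ hξ' hη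
  set m := j + u.length with hm
  have hUopen : IsOpen {g : ℕ → A | ∀ i < m, g i = η i} := by
    have he : {g : ℕ → A | ∀ i < m, g i = η i}
        = ⋂ i ∈ Finset.range m, {g : ℕ → A | g i = η i} := by
      ext g; simp
    rw [he]
    refine isOpen_biInter_finset fun i _ => ?_
    have : {g : ℕ → A | g i = η i} = (fun g : ℕ → A => g i) ⁻¹' {η i} := rfl
    rw [this]
    exact (isOpen_discrete {η i}).preimage (continuous_apply i)
  obtain ⟨g, hgU, hgr⟩ := mem_closure_iff.mp hcl _ hUopen (fun i _ => rfl)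
  obtain ⟨n, rfl⟩ := hgr
  refine ⟨n + 1 + j, by omega, factorAt_iff.2 ?_⟩
  intro i hi
  have h1 : (shift^[n] (shift ξ)) (j + i) = η (j + i) := hgU (j + i) (by omega)
  rw [shift_iterate_apply] at h1
  have h2 : shift ξ (n + (j + i)) = ξ (n + (j + i) + 1) := rfl
  rw [h2] at h1
  have h3 := factorAt_iff.mp hj i hi
  rw [h3, ← h1]
  congr 1
  omega

lemma exists_max_priv_prefix (w : List A) (hw : w ≠ []) :
    ∃ u : List A, u ≠ [] ∧ u <+: w ∧ IsPrivileged u ∧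
      ∀ p : List A, IsPrivileged p → p <+: w → p.length ≤ u.length := by
  classical
  set P : ℕ → Prop := fun n => ∃ p : List A, IsPrivileged p ∧ p <+: w ∧ p.length = n with hP
  obtain ⟨x, t, rfl⟩ := List.exists_cons_of_ne_nil hw
  have h1 : P 1 := ⟨[x], priv_single x, ⟨t, rfl⟩, rfl⟩
  have hbd : ∀ n, P n → n ≤ (x :: t).length := by
    rintro n ⟨p, _, hp, rfl⟩; exact hp.length_le
  have hPN : P (Nat.findGreatest P (x :: t).length) :=
    Nat.findGreatest_spec (hbd 1 h1) h1
  obtain ⟨u, hupriv, hupw, hulen⟩ := hPN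
  refine ⟨u, ?_, hupw, hupriv, ?_⟩
  · have := Nat.le_findGreatest (hbd 1 h1) h1
    intro he
    rw [he] at hulen
    rw [List.length_nil] at hulen
    omega
  · intro p hp hpw
    have hPp : P p.length := ⟨p, hp, hpw, rfl⟩
    have := Nat.le_findGreatest (hbd p.length hPp) hPp
    omega

lemma dir1 [DiscreteTopology A] {Ξ : Set (ℕ → A)} (hΞ : IsSubshift Ξ) (hmin : IsMinimal Ξ)
    {τ : List A → ℕ → A} (hτ : IsChoiceFun Ξ τ) {w : List A} {a : A}
    (ha : w ++ [a] ∈ language Ξ)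
    {u : List A} (hu : u ≠ []) (hupw : u <+: w) (hpriv : IsPrivileged u)
    (hmax : ∀ p : List A, IsPrivileged p → p <+: w → p.length ≤ u.length) :
    ∃ u', CFRin (language Ξ) u u' ∧ (w ++ [a]) <+: u' ∧ τ u' = τ (w ++ [a]) := by
  classical
  set ξ := τ (w ++ [a]) with hξdef
  obtain ⟨hξΞ, hpre⟩ := hτ.1 _ ha
  have huwa : u <+: w ++ [a] := hupw.trans (List.prefix_append w [a])
  have huL : u ∈ language Ξ := prefix_mem_language huwa ha
  have hupre : PrefixOfInf u ξ := prefixOfInf_of_prefix huwa hpre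
  have hwpre : PrefixOfInf w ξ := prefixOfInf_of_prefix (List.prefix_append w [a]) hpre
  have hex : ∃ k, 0 < k ∧ FactorAt u ξ k := exists_pos_factorAt hΞ hmin huL hξΞ
  set k := Nat.find hex with hkdef
  obtain ⟨hkpos, hkfac⟩ := Nat.find_spec hex
  set u' := tk ξ 0 (k + u.length) with hu'def
  have hu'len : u'.length = k + u.length := by simp [hu'def]
  have hu'L : u' ∈ language Ξ := tk_mem_language hξΞ 0 (k + u.length)
  have hu'pre : PrefixOfInf u' ξ := prefixOfInf_tk ξ (k + u.length)
  have hupru' : u <+: u' := prefixOfInf_prefix hupre hu'pre (by omega)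
  have hsuf : u <:+ u' := by
    have hdrop : u'.drop k = tk ξ k u.length := by
      apply List.ext_getElem (by rw [List.length_drop, hu'len, tk_length]; omega)
      intro i h1 h2
      rw [List.getElem_drop]
      simp only [hu'def, tk_getElem]
      congr 1
      omega
    have hue : u = tk ξ k u.length := hkfac
    rw [hue, ← hdrop]
    exact List.drop_suffix k u'
  have hocc : occCount u u' = 2 := by
    rw [occCount_eq_card]
    have hset : ((Finset.range (u'.length + 1)).filter fun j => OccAt u u' j) = {0, k} := by
      ext j
      simp only [Finset.mem_filter, Finset.mem_range, Finset.mem_insert, Finset.mem_singleton]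
      constructor
      · rintro ⟨hj, hoj⟩
        rw [hu'def, occAt_tk_iff hu] at hoj
        obtain ⟨hjle, hjfac⟩ := hoj
        by_contra hcon
        push_neg at hcon
        have hjpos : 0 < j := Nat.pos_of_ne_zero hcon.1
        have hjk : j < k := by omega
        exact Nat.find_min hex hjk ⟨hjpos, hjfac⟩
      · rintro (rfl | rfl)
        · refine ⟨by omega, ?_⟩
          rw [hu'def, occAt_tk_iff hu]
          exact ⟨by omega, hupre⟩
        · refine ⟨by omega, ?_⟩
          rw [hu'def, occAt_tk_iff hu]
          exact ⟨by omega, hkfac⟩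
    rw [hset, Finset.card_insert_of_notMem (by simp only [Finset.mem_singleton]; omega),
      Finset.card_singleton]
  have hCFR : IsCFR u u' := by
    simp only [IsCFR, if_neg hu]
    exact ⟨hupru', hsuf, hocc⟩
  have hwale : w.length + 1 ≤ k + u.length := by
    by_contra hlt
    push_neg at hlt
    have hlt' : k + u.length ≤ w.length := by omega
    have hu'priv : IsPrivileged u' := priv_cfr hpriv hCFR
    have hu'prefw : u' <+: w := prefixOfInf_prefix hu'pre hwpre (by omega)
    have := hmax u' hu'priv hu'prefw
    rw [hu'len] at this
    omega
  have hwpau' : (w ++ [a]) <+: u' := by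
    apply prefixOfInf_prefix hpre hu'pre
    simp only [List.length_append, List.length_singleton]
    omega
  have hτeq : τ u' = τ (w ++ [a]) := by
    rcases eq_or_lt_of_le hwale with heq | hlt
    · have : w ++ [a] = u' := hwpau'.eq_of_length (by simp [hu'len]; omega)
      rw [this]
    · refine hτ.2 (w ++ [a]) ha u' hu'L ?_ hu'pre
      simp only [List.length_append, List.length_singleton]
      omega
  exact ⟨u', ⟨hu'L, hCFR⟩, hwpau', hτeq⟩

lemma cfr_prefix {u u' : List A} (hu : u ≠ []) (h : IsCFR u u') : u <+: u' := by
  simp only [IsCFR, if_neg hu] at h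
  exact h.1

lemma cfr_length_lt {u u' : List A} (hu : u ≠ []) (h : IsCFR u u') : u.length < u'.length := by
  simp only [IsCFR, if_neg hu] at h
  rcases eq_or_lt_of_le h.1.length_le with he | hl
  · exfalso
    have : u = u' := h.1.eq_of_length he
    rw [← this] at h
    rw [occCount_self hu] at h
    omega
  · exact hl

lemma cfr_not_prefix {L : Set (List A)} {u u₁ u₂ : List A} (hu : u ≠ [])
    (h1 : CFRin L u u₁) (h2 : CFRin L u u₂) (hne : u₁ ≠ u₂) : ¬u₁ <+: u₂ := by
  intro hpre
  have hc1 := h1.2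
  have hc2 := h2.2
  have hl1 : u.length < u₁.length := cfr_length_lt hu hc1
  have hl2 : u₁.length < u₂.length :=
    lt_of_le_of_ne hpre.length_le fun he => hne (hpre.eq_of_length he)
  simp only [IsCFR, if_neg hu] at hc1 hc2
  have hO0 : OccAt u u₂ 0 := occAt_prefix hc2.1
  have hO2 : OccAt u u₂ (u₂.length - u.length) := occAt_suffix hc2.2.1
  have hO1 : OccAt u u₂ (u₁.length - u.length) := by
    obtain ⟨t, rfl⟩ := hc1.2.1
    obtain ⟨r, rfl⟩ := hpre
    have hlen : (t ++ u).length - u.length = t.length := by simp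
    rw [hlen]
    exact occAt_append t u r
  have hsub : ({0, u₁.length - u.length, u₂.length - u.length} : Finset ℕ)
      ⊆ (Finset.range (u₂.length + 1)).filter fun j => OccAt u u₂ j := by
    intro j hj
    simp only [Finset.mem_insert, Finset.mem_singleton] at hj
    rcases hj with rfl | rfl | rfl <;>
      simp only [Finset.mem_filter, Finset.mem_range] <;>
      exact ⟨by omega, by assumption⟩
  have hcard : ({0, u₁.length - u.length, u₂.length - u.length} : Finset ℕ).card = 3 := by
    rw [Finset.card_insert_of_notMem (by simp; omega),
      Finset.card_insert_of_notMem (by simp; omega), Finset.card_singleton]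
  have h3 : (3 : ℕ) ≤ 2 := by
    rw [← hcard, ← hc2.2.2, occCount_eq_card u u₂]
    exact Finset.card_le_card hsub
  omega

lemma exists_branch {u₁ u₂ : List A} (h1 : ¬u₁ <+: u₂) (h2 : ¬u₂ <+: u₁) :
    ∃ m, ∃ (hm1 : m < u₁.length) (hm2 : m < u₂.length),
      u₁.take m = u₂.take m ∧ u₁[m] ≠ u₂[m] := by
  classical
  have hex : ∃ n, u₁.take n ≠ u₂.take n := by
    refine ⟨u₁.length, fun he => h1 ?_⟩
    rw [List.take_length] at he
    exact he ▸ List.take_prefix u₁.length u₂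
  set N := Nat.find hex with hN
  have hNspec : u₁.take N ≠ u₂.take N := Nat.find_spec hex
  have hNpos : 0 < N := by
    rcases Nat.eq_zero_or_pos N with h | h
    · rw [h] at hNspec; simp at hNspec
    · exact h
  set m := N - 1 with hm
  have hmN : m + 1 = N := by omega
  have htake : u₁.take m = u₂.take m := by
    by_contra hc
    exact absurd (Nat.find_min hex (show m < N by omega)) (fun h => h hc)
  have hm1 : m < u₁.length := by
    by_contra hc
    push_neg at hc
    have he1 : u₁.take m = u₁ := List.take_of_length_le hc
    have he2 : u₁.take (m + 1) = u₁ := List.take_of_length_le (by omega)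
    apply h1
    rw [he1] at htake
    exact htake ▸ List.take_prefix m u₂
  have hm2 : m < u₂.length := by
    by_contra hc
    push_neg at hc
    have he1 : u₂.take m = u₂ := List.take_of_length_le hc
    apply h2
    rw [he1] at htake
    exact htake.symm ▸ List.take_prefix m u₁
  refine ⟨m, hm1, hm2, htake, ?_⟩
  intro hg
  apply hmN ▸ hNspec
  rw [take_succ_getElem hm1, take_succ_getElem hm2, htake, hg]

lemma forced_ext {Ξ : Set (ℕ → A)} (hbal : RSBalanced (language Ξ))
    {τ : List A → ℕ → A} (hτ : IsChoiceFun Ξ τ)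
    {u u' c : List A} (hpriv : IsPrivileged u) (huL : u ∈ language Ξ)
    (hcfr : CFRin (language Ξ) u u') (hrs : RightSpecial (language Ξ) c)
    (huc : u <+: c) (hcu' : PPrefix c u') :
    τ u' = τ (u'.take (c.length + 1)) := by
  classical
  set v := u'.take (c.length + 1) with hvdef
  have hlen : c.length < u'.length := PPrefix.length_lt hcu'
  have hvlen : v.length = c.length + 1 := by
    rw [hvdef, List.length_take]
    omega
  have hvL : v ∈ language Ξ := prefix_mem_language (List.take_prefix _ _) hcfr.1
  obtain ⟨hξΞ, hvpre⟩ := hτ.1 v hvL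
  set ξ := τ v with hξdef
  have claim : ∀ n, c.length + 1 ≤ n → n ≤ u'.length → u'.take n = tk ξ 0 n := by
    intro n hn
    induction n, hn using Nat.le_induction with
    | base =>
      intro _
      have h := prefixOfInf_eq_tk hvpre
      rw [hvlen] at h
      exact h
    | succ n hn ih =>
      intro hsucc
      have hnle : n ≤ u'.length := by omega
      have hnlt : n < u'.length := by omega
      have hto : u'.take n = tk ξ 0 n := ih hnle
      have hgeq : ξ n = u'[n] := by
        by_contra hne
        set p := u'.take n with hpdef
        have hplen : p.length = n := by rw [hpdef, List.length_take]; omega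
        have hpL : p ∈ language Ξ := prefix_mem_language (List.take_prefix _ _) hcfr.1
        have h1 : p ++ [u'[n]] ∈ language Ξ := by
          rw [← take_succ_getElem hnlt]
          exact prefix_mem_language (List.take_prefix _ _) hcfr.1
        have h2 : p ++ [ξ n] ∈ language Ξ := by
          have he : p ++ [ξ n] = tk ξ 0 (n + 1) := by
            rw [tk_succ, hto]
            simp
          rw [he]
          exact tk_mem_language hξΞ 0 (n + 1)
        have hpRS : RightSpecial (language Ξ) p :=
          ⟨hpL, u'[n], ξ n, fun he => hne he.symm, h1, h2⟩
        have hup : u <+: p := by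
          rw [hpdef, List.prefix_take_iff]
          exact ⟨huc.trans hcu'.1, by have := huc.length_le; omega⟩
        have hpp : PPrefix p u' := by
          refine ⟨List.take_prefix _ _, fun he => ?_⟩
          rw [he] at hplen
          omega
        obtain ⟨r, _, hruniq⟩ := hbal u hpriv huL u' hcfr
        have hcr := hruniq c ⟨hrs, huc, hcu'⟩
        have hpr := hruniq p ⟨hpRS, hup, hpp⟩
        have : p = c := hpr.trans hcr.symm
        have := congrArg List.length this
        rw [hplen] at this
        omega
      rw [take_succ_getElem hnlt, tk_succ, hto]
      simp [hgeq]
  have hfin : u' = tk ξ 0 u'.length := by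
    have h := claim u'.length (by omega) le_rfl
    rw [List.take_length] at h
    exact h
  have hpre' : PrefixOfInf u' ξ := by
    show u' = tk ξ 0 u'.length
    exact hfin
  rcases eq_or_lt_of_le (show c.length + 1 ≤ u'.length by omega) with he | hl
  · have : v = u' := by
      rw [hvdef, he, List.take_length]
    rw [hξdef, this]
  · exact hτ.2 v hvL u' hcfr.1 (by omega) hpre'

end Aux

/-- If the subshift is right-special balanced then for every choice
function `τ` the approximation graphs `Γ_τ` and `Γ̃_τ` have the same edges. -/
theorem statement11 {A : Type*} [Fintype A] [DecidableEq A] [TopologicalSpace A]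
    [DiscreteTopology A] (Ξ : Set (ℕ → A)) (hΞ : IsSubshift Ξ) (hmin : IsMinimal Ξ)
    (hap : Aperiodic Ξ) (hbal : RSBalanced (language Ξ)) (τ : List A → ℕ → A)
    (hτ : IsChoiceFun Ξ τ) :
    {e : (ℕ → A) × (ℕ → A) | ∃ v₁ v₂, H1 (language Ξ) v₁ v₂ ∧ e = (τ v₁, τ v₂)} =
      {e : (ℕ → A) × (ℕ → A) | ∃ u₁ u₂, TildeH1 (language Ξ) u₁ u₂ ∧ e = (τ u₁, τ u₂)} := by
  ext e
  simp only [Set.mem_setOf_eq]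
  constructor
  · rintro ⟨v₁, v₂, ⟨h1L, h2L, hne, w, a, b, rfl, rfl⟩, rfl⟩
    by_cases hw : w = []
    · subst hw
      refine ⟨[] ++ [a], [] ++ [b], ⟨hne, [], priv_nil, ⟨h1L, ?_⟩, ⟨h2L, ?_⟩⟩, rfl⟩
      · simp [IsCFR]
      · simp [IsCFR]
    · obtain ⟨u, hune, hupw, hupriv, hmax⟩ := exists_max_priv_prefix w hw
      obtain ⟨u₁, hcfr1, hpre1, hτ1⟩ := dir1 hΞ hmin hτ h1L hune hupw hupriv hmax
      obtain ⟨u₂, hcfr2, hpre2, hτ2⟩ := dir1 hΞ hmin hτ h2L hune hupw hupriv hmax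
      have hne12 : u₁ ≠ u₂ := by
        rintro rfl
        have hp := List.prefix_of_prefix_length_le hpre1 hpre2 (by simp)
        exact hne (hp.eq_of_length (by simp))
      exact ⟨u₁, u₂, ⟨hne12, u, hupriv, hcfr1, hcfr2⟩, by rw [hτ1, hτ2]⟩
  · rintro ⟨u₁, u₂, ⟨hne, u, hupriv, hc1, hc2⟩, rfl⟩
    by_cases hu : u = []
    · subst hu
      have h1 : u₁.length = 1 := by have := hc1.2; simpa [IsCFR] using this
      have h2 : u₂.length = 1 := by have := hc2.2; simpa [IsCFR] using this
      obtain ⟨a, rfl⟩ := List.length_eq_one_iff.mp h1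
      obtain ⟨b, rfl⟩ := List.length_eq_one_iff.mp h2
      exact ⟨[a], [b], ⟨hc1.1, hc2.1, hne, [], a, b, by simp, by simp⟩, rfl⟩
    · have hnp1 : ¬u₁ <+: u₂ := cfr_not_prefix hu hc1 hc2 hne
      have hnp2 : ¬u₂ <+: u₁ := cfr_not_prefix hu hc2 hc1 hne.symm
      obtain ⟨m, hm1, hm2, htake, hgne⟩ := exists_branch hnp1 hnp2
      have hu1p : u <+: u₁ := cfr_prefix hu hc1.2
      have hu2p : u <+: u₂ := cfr_prefix hu hc2.2
      have huL : u ∈ language Ξ := prefix_mem_language hu1p hc1.1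
      have hum : u.length ≤ m := by
        by_contra hcon
        push_neg at hcon
        have e1 : u[m]'(by omega) = u₁[m] := hu1p.getElem (by omega)
        have e2 : u[m]'(by omega) = u₂[m] := hu2p.getElem (by omega)
        exact hgne (e1.symm.trans e2)
      set c := u₁.take m with hcdef
      have hclen : c.length = m := by rw [hcdef, List.length_take]; omega
      have hcu1 : PPrefix c u₁ := ⟨List.take_prefix _ _, fun he => by rw [he] at hclen; omega⟩
      have hcu2 : PPrefix c u₂ := by
        refine ⟨?_, fun he => by rw [he] at hclen; omega⟩
        rw [htake]
        exact List.take_prefix _ _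
      have huc : u <+: c := by
        rw [hcdef, List.prefix_take_iff]
        exact ⟨hu1p, hum⟩
      have hv1 : u₁.take (m + 1) = c ++ [u₁[m]] := by rw [take_succ_getElem hm1, hcdef]
      have hv2 : u₂.take (m + 1) = c ++ [u₂[m]] := by rw [take_succ_getElem hm2, ← htake]
      have h1L : c ++ [u₁[m]] ∈ language Ξ := by
        rw [← hv1]
        exact prefix_mem_language (List.take_prefix _ _) hc1.1
      have h2L : c ++ [u₂[m]] ∈ language Ξ := by
        rw [← hv2]
        exact prefix_mem_language (List.take_prefix _ _) hc2.1
      have hcL : c ∈ language Ξ := prefix_mem_language hcu1.1 hc1.1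
      have hrs : RightSpecial (language Ξ) c := ⟨hcL, u₁[m], u₂[m], hgne, h1L, h2L⟩
      have ht1 := forced_ext hbal hτ hupriv huL hc1 hrs huc hcu1
      have ht2 := forced_ext hbal hτ hupriv huL hc2 hrs huc hcu2
      refine ⟨c ++ [u₁[m]], c ++ [u₂[m]],
        ⟨h1L, h2L, by simp [hgne], c, u₁[m], u₂[m], rfl, rfl⟩, ?_⟩
      rw [ht1, ht2, hclen, hv1, hv2]


end Arx1111
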